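/- Let N ≥ 4 and ℓ > 0. For every equilateral closed polygon y : ℤ/Nℤ → ℝ² with edge length ℓ, the total length of the 2-diagonals satisfies ∑_{i=1}^N |y_i − y_{i+2}| ≤ 2Nℓ cos(π/N). -/

import Mathlib

open Real

private noncomputable def myF {N : ℕ} [NeZero N] (z : ZMod N → ℂ) (k : ZMod N) : ℂ :=
  ∑ j : ZMod N, ZMod.stdAddChar (j * k) * z j

private lemma conj_stdAddChar {N : ℕ} [NeZero N] (a : ZMod N) :
    (starRingEnd ℂ) (ZMod.stdAddChar a) = ZMod.stdAddChar (-a) := by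
  have h1 : ZMod.stdAddChar a * ZMod.stdAddChar (-a) = 1 := by
    rw [← AddChar.map_add_eq_mul]; simp
  have h2 : ‖ZMod.stdAddChar a‖ = 1 := by
    rw [ZMod.stdAddChar_apply]; exact Circle.norm_coe _
  rw [← Complex.inv_eq_conj h2]
  exact (eq_inv_of_mul_eq_one_left (by rw [mul_comm] at h1; exact h1)).symm

private lemma ortho {N : ℕ} [NeZero N] (a : ZMod N) :
    ∑ k : ZMod N, ZMod.stdAddChar (a * k) = if a = 0 then (N : ℂ) else 0 := by
  have := AddChar.sum_mulShift (ψ := ZMod.stdAddChar (N := N)) a (ZMod.isPrimitive_stdAddChar N)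
  simpa [mul_comm, ZMod.card] using this

private lemma key {N : ℕ} [NeZero N] (z : ZMod N → ℂ) (m : ZMod N) :
    ∑ k : ZMod N, ZMod.stdAddChar (m * k) * ((starRingEnd ℂ) (myF z k) * myF z k)
      = N * ∑ j : ZMod N, (starRingEnd ℂ) (z j) * z (j - m) := by
  have hconjF : ∀ k, (starRingEnd ℂ) (myF z k)
      = ∑ j : ZMod N, ZMod.stdAddChar (-(j * k)) * (starRingEnd ℂ) (z j) := by
    intro k
    rw [myF, map_sum]
    exact Finset.sum_congr rfl fun j _ => by rw [map_mul, conj_stdAddChar]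
  calc ∑ k : ZMod N, ZMod.stdAddChar (m * k) * ((starRingEnd ℂ) (myF z k) * myF z k)
      = ∑ k : ZMod N, ∑ j : ZMod N, ∑ l : ZMod N,
          ((starRingEnd ℂ) (z j) * z l) * ZMod.stdAddChar ((m - j + l) * k) := by
        refine Finset.sum_congr rfl fun k _ => ?_
        rw [hconjF, myF, Finset.sum_mul_sum, Finset.mul_sum]
        refine Finset.sum_congr rfl fun j _ => ?_
        rw [Finset.mul_sum]
        refine Finset.sum_congr rfl fun l _ => ?_
        have h3 : ZMod.stdAddChar (m * k) * (ZMod.stdAddChar (-(j * k)) * ZMod.stdAddChar (l * k))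
            = ZMod.stdAddChar ((m - j + l) * k) := by
          rw [← AddChar.map_add_eq_mul, ← AddChar.map_add_eq_mul]
          congr 1; ring
        calc ZMod.stdAddChar (m * k) * (ZMod.stdAddChar (-(j * k)) * (starRingEnd ℂ) (z j)
              * (ZMod.stdAddChar (l * k) * z l))
            = ((starRingEnd ℂ) (z j) * z l) * (ZMod.stdAddChar (m * k)
              * (ZMod.stdAddChar (-(j * k)) * ZMod.stdAddChar (l * k))) := by ring
          _ = ((starRingEnd ℂ) (z j) * z l) * ZMod.stdAddChar ((m - j + l) * k) := by rw [h3]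
    _ = ∑ j : ZMod N, ∑ l : ZMod N,
          ((starRingEnd ℂ) (z j) * z l) * ∑ k : ZMod N, ZMod.stdAddChar ((m - j + l) * k) := by
        rw [Finset.sum_comm]
        refine Finset.sum_congr rfl fun j _ => ?_
        rw [Finset.sum_comm]
        exact Finset.sum_congr rfl fun l _ => (Finset.mul_sum _ _ _).symm
    _ = ∑ j : ZMod N, (starRingEnd ℂ) (z j) * z (j - m) * N := by
        refine Finset.sum_congr rfl fun j _ => ?_
        rw [Finset.sum_eq_single (j - m)]
        · rw [ortho, if_pos (by ring)]
        · intro l _ hl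
          rw [ortho, if_neg (fun h => hl (by linear_combination h)), mul_zero]
        · exact fun h => absurd (Finset.mem_univ _) h
    _ = N * ∑ j : ZMod N, (starRingEnd ℂ) (z j) * z (j - m) := by
        rw [Finset.mul_sum]; exact Finset.sum_congr rfl fun j _ => by ring

private lemma cos_aux {N v : ℕ} (h1 : 1 ≤ v) (h2 : 2 * v ≤ N) :
    Real.cos (2 * π * v / N) ≤ Real.cos (2 * π / N) := by
  have hN0 : 0 < N := by omega
  have hN : 0 < (N : ℝ) := by exact_mod_cast hN0
  have hv : (1 : ℝ) ≤ v := by exact_mod_cast h1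
  have h2' : (2 * v : ℝ) ≤ N := by exact_mod_cast h2
  apply Real.cos_le_cos_of_nonneg_of_le_pi
  · positivity
  · rw [div_le_iff₀ hN]
    nlinarith [Real.pi_pos]
  · rw [div_le_div_iff₀ hN hN]
    nlinarith [Real.pi_pos, mul_nonneg (mul_nonneg Real.pi_pos.le (sub_nonneg.mpr hv)) hN.le]

private lemma cos_le_cos_two_pi_div {N v : ℕ} (hN : 2 ≤ N) (h1 : 1 ≤ v) (h2 : v ≤ N - 1) :
    Real.cos (2 * π * v / N) ≤ Real.cos (2 * π / N) := by
  have hvN : v < N := by omega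
  rcases le_or_gt (2 * v) N with h | h
  · exact cos_aux h1 h
  · have hu1 : 1 ≤ N - v := by omega
    have hu2 : 2 * (N - v) ≤ N := by omega
    have heq : 2 * π * (v : ℝ) / N = 2 * π - 2 * π * ((N - v : ℕ) : ℝ) / N := by
      have hNv : ((N - v : ℕ) : ℝ) = (N : ℝ) - v := by
        push_cast [Nat.cast_sub hvN.le]; ring
      have hN' : (N : ℝ) ≠ 0 := by positivity
      rw [hNv]; field_simp; ring
    rw [heq, Real.cos_two_pi_sub]
    exact cos_aux hu1 hu2

private lemma re_stdAddChar_le {N : ℕ} [NeZero N] (hN : 2 ≤ N) (a : ZMod N) (ha : a ≠ 0) :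
    (ZMod.stdAddChar a).re ≤ Real.cos (2 * π / N) := by
  have h := ZMod.toCircle_apply (N := N) a
  have h2 : (ZMod.stdAddChar a) = Complex.exp (((2 * π * a.val / N : ℝ) : ℂ) * Complex.I) := by
    rw [ZMod.stdAddChar_apply, h]
    congr 1
    push_cast
    ring
  rw [h2, Complex.exp_ofReal_mul_I_re]
  apply cos_le_cos_two_pi_div hN
  · have := (ZMod.val_eq_zero a).not.mpr ha
    omega
  · have := ZMod.val_lt a
    omega

/-- Let `N ≥ 4` and `ℓ > 0`. For every equilateral closed polygon `y : ℤ/Nℤ → ℝ²` with edge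
length `ℓ`, the total length of the `2`-diagonals satisfies
`∑_i |y_i − y_{i+2}| ≤ 2Nℓ cos(π/N)`. -/
theorem total_two_diagonal_length_le (N : ℕ) [NeZero N] (hN : 4 ≤ N) (ℓ : ℝ) (hℓ : 0 < ℓ)
    (y : ZMod N → EuclideanSpace ℝ (Fin 2))
    (hy : ∀ i, dist (y (i + 1)) (y i) = ℓ) :
    ∑ i : ZMod N, dist (y i) (y (i + 2)) ≤ 2 * N * ℓ * Real.cos (Real.pi / N) := by
  classical
  have hNR : (0 : ℝ) < N := by
    have : 0 < N := by omega
    exact_mod_cast this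
  -- move to ℂ
  set w : ZMod N → ℂ := fun i => ⟨y i 0, y i 1⟩ with hw
  have hdistw : ∀ a b : ZMod N, dist (y a) (y b) = dist (w a) (w b) := by
    intro a b
    rw [EuclideanSpace.dist_eq, Complex.dist_eq_re_im]
    simp [hw, Fin.sum_univ_two, Real.dist_eq, sq_abs]
  set z : ZMod N → ℂ := fun i => w (i + 1) - w i with hzdef
  have hz : ∀ i, ‖z i‖ = ℓ := by
    intro i
    have h := hy i
    rw [hdistw, Complex.dist_eq] at h
    simpa [hzdef] using h
  have hnormSq : ∀ i, Complex.normSq (z i) = ℓ ^ 2 := by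
    intro i
    rw [← Complex.sq_norm, hz]
  have hshift : ∀ f : ZMod N → ℂ, ∑ i : ZMod N, f (i + 1) = ∑ i : ZMod N, f i := by
    intro f
    exact Fintype.sum_equiv (Equiv.addRight 1) _ _ (fun i => rfl)
  have hzsum : ∑ i : ZMod N, z i = 0 := by
    simp only [hzdef, Finset.sum_sub_distrib]
    rw [hshift w, sub_self]
  -- Fourier
  have hF0 : myF z 0 = 0 := by
    simp [myF, hzsum]
  set P : ZMod N → ℝ := fun k => Complex.normSq (myF z k) with hP
  have hconjmul : ∀ k, (starRingEnd ℂ) (myF z k) * myF z k = ((P k : ℝ) : ℂ) := by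
    intro k
    rw [hP, Complex.normSq_eq_conj_mul_self]
  -- Parseval
  have hPar : ∑ k : ZMod N, P k = N * (N * ℓ ^ 2) := by
    have h0 := key z 0
    simp only [zero_mul, AddChar.map_zero_eq_one, one_mul, sub_zero] at h0
    rw [Finset.sum_congr rfl (fun k _ => hconjmul k)] at h0
    have hrhs : ∑ j : ZMod N, (starRingEnd ℂ) (z j) * z j
        = ((N * ℓ ^ 2 : ℝ) : ℂ) := by
      have hterm : ∀ j : ZMod N, (starRingEnd ℂ) (z j) * z j = ((ℓ ^ 2 : ℝ) : ℂ) := fun j => by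
        rw [← Complex.normSq_eq_conj_mul_self, hnormSq]
      rw [Finset.sum_congr rfl fun j _ => hterm j, Finset.sum_const, Finset.card_univ,
        ZMod.card, nsmul_eq_mul]
      push_cast
      ring
    rw [hrhs] at h0
    have := congrArg Complex.re h0
    rw [Complex.re_sum] at this
    simp only [Complex.ofReal_re] at this
    rw [this, ← Complex.ofReal_natCast, ← Complex.ofReal_mul, Complex.ofReal_re]
  -- shifted sum
  set S : ℂ := ∑ j : ZMod N, (starRingEnd ℂ) (z j) * z (j + 1) with hS
  have hkey : ∑ k : ZMod N, (ZMod.stdAddChar ((-1 : ZMod N) * k)).re * P k = N * S.re := by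
    have h1 := key z (-1)
    simp only [sub_neg_eq_add] at h1
    rw [Finset.sum_congr rfl (fun k _ => by rw [hconjmul k])] at h1
    rw [← hS] at h1
    have := congrArg Complex.re h1
    rw [Complex.re_sum] at this
    simp only [Complex.mul_re, Complex.ofReal_re, Complex.ofReal_im, mul_zero, sub_zero,
      Complex.natCast_re, Complex.natCast_im, zero_mul] at this
    exact this
  have hcos2 : ∑ k : ZMod N, (ZMod.stdAddChar ((-1 : ZMod N) * k)).re * P k
      ≤ Real.cos (2 * π / N) * ∑ k : ZMod N, P k := by
    rw [Finset.mul_sum]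
    apply Finset.sum_le_sum
    intro k _
    by_cases hk : k = 0
    · subst hk
      have : P 0 = 0 := by rw [hP]; simp [hF0]
      simp [this]
    · have hne : (-1 : ZMod N) * k ≠ 0 := by
        rw [neg_one_mul]
        exact neg_ne_zero.mpr hk
      exact mul_le_mul_of_nonneg_right (re_stdAddChar_le (by omega) _ hne)
        (Complex.normSq_nonneg _)
  have hSre : S.re ≤ Real.cos (2 * π / N) * (N * ℓ ^ 2) := by
    have h1 : N * S.re ≤ Real.cos (2 * π / N) * (N * (N * ℓ ^ 2)) := by
      rw [← hkey, ← hPar]; exact hcos2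
    have h2 : (N : ℝ) * S.re ≤ (N : ℝ) * (Real.cos (2 * π / N) * (N * ℓ ^ 2)) := by
      calc (N : ℝ) * S.re ≤ Real.cos (2 * π / N) * (N * (N * ℓ ^ 2)) := h1
        _ = (N : ℝ) * (Real.cos (2 * π / N) * (N * ℓ ^ 2)) := by ring
    exact le_of_mul_le_mul_left h2 hNR
  -- geometry
  have hdiag : ∀ i : ZMod N, dist (y i) (y (i + 2)) = ‖z i + z (i + 1)‖ := by
    intro i
    rw [hdistw, Complex.dist_eq]
    have h12 : i + 1 + 1 = i + 2 := by ring
    have : w i - w (i + 2) = -(z i + z (i + 1)) := by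
      simp only [hzdef, h12]
      ring
    rw [this, norm_neg]
  have hsq : ∀ i : ZMod N, ‖z i + z (i + 1)‖ ^ 2
      = 2 * ℓ ^ 2 + 2 * ((starRingEnd ℂ) (z i) * z (i + 1)).re := by
    intro i
    rw [Complex.sq_norm, Complex.normSq_add, hnormSq, hnormSq]
    have : (z i * (starRingEnd ℂ) (z (i + 1))).re
        = ((starRingEnd ℂ) (z i) * z (i + 1)).re := by
      rw [← Complex.conj_re (z i * (starRingEnd ℂ) (z (i + 1))), map_mul, Complex.conj_conj]
    rw [this]
    ring
  have hsumsq : ∑ i : ZMod N, ‖z i + z (i + 1)‖ ^ 2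
      = 2 * (N * ℓ ^ 2) + 2 * S.re := by
    rw [Finset.sum_congr rfl (fun i _ => hsq i), Finset.sum_add_distrib,
      Finset.sum_const, Finset.card_univ, ZMod.card, ← Finset.mul_sum,
      hS, Complex.re_sum]
    push_cast
    ring
  -- Cauchy–Schwarz
  have hCS : (∑ i : ZMod N, ‖z i + z (i + 1)‖) ^ 2
      ≤ N * ∑ i : ZMod N, ‖z i + z (i + 1)‖ ^ 2 := by
    have := sq_sum_le_card_mul_sum_sq
      (s := (Finset.univ : Finset (ZMod N))) (f := fun i => ‖z i + z (i + 1)‖)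
    simpa [Finset.card_univ, ZMod.card] using this
  have hdbl : 1 + Real.cos (2 * π / N) = 2 * Real.cos (π / N) ^ 2 := by
    have h := Real.cos_sq (π / N)
    have h2 : 2 * (π / N) = 2 * π / N := by ring
    rw [h2] at h
    linarith
  have hcosnn : 0 ≤ Real.cos (π / N) := by
    apply Real.cos_nonneg_of_mem_Icc
    constructor
    · have : 0 ≤ π / N := by positivity
      linarith [Real.pi_pos]
    · rw [div_le_div_iff₀ hNR (by norm_num : (0:ℝ) < 2)]
      have : (4 : ℝ) ≤ N := by exact_mod_cast hN
      nlinarith [Real.pi_pos]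
  have hfinal : (∑ i : ZMod N, ‖z i + z (i + 1)‖) ^ 2
      ≤ (2 * N * ℓ * Real.cos (π / N)) ^ 2 := by
    calc (∑ i : ZMod N, ‖z i + z (i + 1)‖) ^ 2
        ≤ N * ∑ i : ZMod N, ‖z i + z (i + 1)‖ ^ 2 := hCS
      _ = N * (2 * (N * ℓ ^ 2) + 2 * S.re) := by rw [hsumsq]
      _ ≤ N * (2 * (N * ℓ ^ 2) + 2 * (Real.cos (2 * π / N) * (N * ℓ ^ 2))) := by
          have := hSre
          nlinarith [hNR]
      _ = 2 * (N : ℝ) ^ 2 * ℓ ^ 2 * (1 + Real.cos (2 * π / N)) := by ring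
      _ = (2 * N * ℓ * Real.cos (π / N)) ^ 2 := by rw [hdbl]; ring
  have hTnn : 0 ≤ ∑ i : ZMod N, ‖z i + z (i + 1)‖ :=
    Finset.sum_nonneg fun i _ => (norm_nonneg _)
  have hBnn : 0 ≤ 2 * (N : ℝ) * ℓ * Real.cos (π / N) := by positivity
  rw [Finset.sum_congr rfl (fun i _ => hdiag i)]
  nlinarith [hfinal, hTnn, hBnn]
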